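/- Let Z be a random variable on a probability space with 0 ≤ Z ≤ 1 almost surely, let c > 0, and define β₁ : [0,1] → ℝ by β₁(b) = 𝔼[max(b, Z)] − c. If β₁(0) < 0, then β₁(b) < b for all b ∈ [0,1]. -/

import Mathlib

open MeasureTheory

/-- Part 2 of Lemma 3: if `β₁(0) < 0`, then `β₁(b) < b` for all `b ∈ [0,1]`,
where `β₁(b) = 𝔼[max(b, Z)] − c`. -/
theorem beta_one_below_identity
    {Ω : Type*} [MeasurableSpace Ω] (μ : Measure Ω) [IsProbabilityMeasure μ]
    (Z : Ω → ℝ) (hZmeas : Measurable Z)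
    (hZ01 : ∀ᵐ ω ∂μ, Z ω ∈ Set.Icc (0 : ℝ) 1)
    (c : ℝ) (hc : 0 < c)
    (h0 : (∫ ω, max 0 (Z ω) ∂μ) - c < 0) :
    ∀ b ∈ Set.Icc (0 : ℝ) 1, (∫ ω, max b (Z ω) ∂μ) - c < b := by
  have hint : ∀ b' : ℝ, Integrable (fun ω => max b' (Z ω)) μ := by
    intro b'
    refine (integrable_const (max |b'| 1)).mono'
      ((measurable_const.max hZmeas).aestronglyMeasurable) ?_
    filter_upwards [hZ01] with ω hω
    rw [Real.norm_eq_abs]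
    calc |max b' (Z ω)| ≤ max |b'| |Z ω| := abs_max_le_max_abs_abs
      _ ≤ max |b'| 1 := by
          apply max_le_max le_rfl
          rw [abs_le]; exact ⟨by linarith [hω.1], hω.2⟩
  intro b hb
  have hmono : (∫ ω, max b (Z ω) ∂μ) ≤ ∫ ω, b + max 0 (Z ω) ∂μ := by
    apply integral_mono_ae (hint b) ((integrable_const b).add (hint 0))
    filter_upwards [hZ01] with ω hω
    simp only [Pi.add_apply]
    rcases le_total (Z ω) b with h | h
    · simp only [max_eq_left h]
      have : 0 ≤ max 0 (Z ω) := le_max_left _ _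
      linarith
    · simp only [max_eq_right h]
      have : Z ω ≤ max 0 (Z ω) := le_max_right _ _
      linarith [hb.1]
  rw [integral_add (integrable_const b) (hint 0), integral_const,
    probReal_univ, smul_eq_mul, one_mul] at hmono
  linarith
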